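/- arXiv:1911.01992 — 2 statements merged into one kernel-verified Lean document; each statement's English description precedes it below -/
import Mathlib

section
/- For a continuous path ψ : [0,T] → ℝ^{d'} with ψ(0) = 0 and α ∈ (0,1), the α-Hölder norm ‖ψ‖_α = sup_{s≠t} |ψ(t)−ψ(s)|/|t−s|^α is equivalent (up to constants depending only on α) to the Ciesielski wavelet norm ‖ψ‖'_α = sup_{(p,m)∈Λ} 2^{(α−1/2)p} |ψ_{pm}|, where ψ_{pm} = √(2^p/T) (2ψ(t¹_{pm}) − ψ(t⁰_{pm}) − ψ(t²_{pm})) are the Schauder–Fourier coefficients. -/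
open Set

/-- The Schauder–Fourier coefficient `ψ_{pm}` of a path `ψ : ℝ → ℝ^{d'}` on `[0,T]`,
for `(p,m)` with `1 ≤ m ≤ 2^p`:
`ψ_{pm} = √(2^p/T) (2 ψ(t¹_{pm}) − ψ(t⁰_{pm}) − ψ(t²_{pm}))`. -/
noncomputable def schauderCoef {d : ℕ} (T : ℝ) (ψ : ℝ → EuclideanSpace ℝ (Fin d))
    (p m : ℕ) : EuclideanSpace ℝ (Fin d) :=
  Real.sqrt (2 ^ p / T) •
    ((2 : ℝ) • ψ ((2 * (m : ℝ) - 1) * T / 2 ^ (p + 1))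
      - ψ (((m : ℝ) - 1) * T / 2 ^ p) - ψ ((m : ℝ) * T / 2 ^ p))

section CiesielskiAux

open Filter Topology

variable {E : Type*} [NormedAddCommGroup E] [NormedSpace ℝ E]

lemma dyadic_step (T : ℝ) (hT : 0 < T) (α : ℝ) (hα : α ∈ Ioo (0:ℝ) 1)
    (ψ : ℝ → E) (B M : ℝ) (hM : 0 ≤ M)
    (h0 : ‖ψ T - ψ 0‖ ≤ B)
    (hX : ∀ p m : ℕ, 1 ≤ m → m ≤ 2 ^ p →
      ‖(2 : ℝ) • ψ ((2 * (m:ℝ) - 1) * T / 2 ^ (p+1)) - ψ (((m:ℝ) - 1) * T / 2 ^ p)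
        - ψ ((m:ℝ) * T / 2 ^ p)‖ ≤ M * (2:ℝ) ^ (-(α * p))) :
    ∀ n k : ℕ, 1 ≤ k → k ≤ 2 ^ n →
      ‖ψ ((k:ℝ) * T / 2 ^ n) - ψ (((k:ℝ) - 1) * T / 2 ^ n)‖ ≤
        (B + M / ((2:ℝ) ^ (1 - α) - 1)) * (2:ℝ) ^ (-(α * n)) := by
  obtain ⟨hα0, hα1⟩ := hα
  have hden : (0:ℝ) < (2:ℝ) ^ (1 - α) - 1 := by
    have : (1:ℝ) < (2:ℝ) ^ (1 - α) := by
      apply Real.one_lt_rpow_iff_of_pos (by norm_num) |>.mpr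
      exact Or.inl ⟨by norm_num, by linarith⟩
    linarith
  set K := B + M / ((2:ℝ) ^ (1 - α) - 1) with hKdef
  have hBnn : 0 ≤ B := le_trans (norm_nonneg _) h0
  have hBK : B ≤ K := by rw [hKdef]; linarith [div_nonneg hM hden.le]
  have hK : M / ((2:ℝ) ^ (1 - α) - 1) ≤ K := by rw [hKdef]; linarith
  have hKnn : 0 ≤ K := le_trans hBnn hBK
  intro n
  induction n with
  | zero =>
    intro k h1 h2
    interval_cases k
    simpa using le_trans h0 (by nlinarith [Real.rpow_pos_of_pos (show (0:ℝ)<2 by norm_num) (-(α*(0:ℕ)))])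
  | succ n ih =>
    intro k h1 h2
    push_cast
    have hpow : ((2:ℝ) ^ (-(α * n)) : ℝ) = (2:ℝ) ^ α * (2:ℝ) ^ (-(α * ((n:ℝ)+1))) := by
      rw [← Real.rpow_add (by norm_num)]
      ring_nf
    have key : (K + M) * (2:ℝ) ^ α ≤ K * 2 := by
      have hy : (0:ℝ) < (2:ℝ) ^ (1-α) := Real.rpow_pos_of_pos (by norm_num) _
      have h2a : (2:ℝ) ^ α = 2 / (2:ℝ) ^ (1 - α) := by
        rw [eq_div_iff (by positivity), ← Real.rpow_add (by norm_num)]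
        norm_num
      rw [h2a, mul_div_assoc', div_le_iff₀ hy]
      have hK' : M ≤ K * ((2:ℝ)^(1-α) - 1) := (div_le_iff₀ hden).mp hK
      nlinarith [hKnn, hK']
    have hnum : (K * (2:ℝ) ^ (-(α * n)) + M * (2:ℝ) ^ (-(α * n))) / 2
        ≤ K * (2:ℝ) ^ (-(α * ((n:ℝ)+1))) := by
      have hp : (0:ℝ) < (2:ℝ) ^ (-(α * ((n:ℝ)+1))) := Real.rpow_pos_of_pos (by norm_num) _
      rw [hpow, div_le_iff₀ (by norm_num : (0:ℝ) < 2)]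
      nlinarith [key, hp, hp.le]
    rcases Nat.even_or_odd k with ⟨m, hm⟩ | ⟨m, hm⟩
    · -- k = 2m even
      have hm1 : 1 ≤ m := by omega
      have hm2 : m ≤ 2 ^ n := by
        have : k ≤ 2 ^ (n+1) := h2
        omega
      have hkc : (k:ℝ) = 2 * m := by rw [hm]; push_cast; ring
      have e1 : (k:ℝ) * T / 2 ^ (n+1) = (m:ℝ) * T / 2 ^ n := by rw [hkc]; ring_nf
      have e2 : ((k:ℝ) - 1) * T / 2 ^ (n+1) = (2 * (m:ℝ) - 1) * T / 2 ^ (n+1) := by rw [hkc]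
      rw [e1, e2]
      have hdecomp : ψ ((m:ℝ) * T / 2 ^ n) - ψ ((2 * (m:ℝ) - 1) * T / 2 ^ (n+1))
          = (2:ℝ)⁻¹ • ((ψ ((m:ℝ) * T / 2 ^ n) - ψ (((m:ℝ) - 1) * T / 2 ^ n))
            - ((2 : ℝ) • ψ ((2 * (m:ℝ) - 1) * T / 2 ^ (n+1)) - ψ (((m:ℝ) - 1) * T / 2 ^ n)
              - ψ ((m:ℝ) * T / 2 ^ n))) := by
        module
      rw [hdecomp, norm_smul]
      have htr : ‖(ψ ((m:ℝ) * T / 2 ^ n) - ψ (((m:ℝ) - 1) * T / 2 ^ n))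
            - ((2 : ℝ) • ψ ((2 * (m:ℝ) - 1) * T / 2 ^ (n+1)) - ψ (((m:ℝ) - 1) * T / 2 ^ n)
              - ψ ((m:ℝ) * T / 2 ^ n))‖ ≤ K * (2:ℝ) ^ (-(α * n)) + M * (2:ℝ) ^ (-(α * n)) :=
        le_trans (norm_sub_le _ _) (add_le_add (ih m hm1 hm2) (hX n m hm1 hm2))
      calc ‖(2:ℝ)⁻¹‖ * ‖_‖ ≤ (2:ℝ)⁻¹ * (K * (2:ℝ) ^ (-(α * n)) + M * (2:ℝ) ^ (-(α * n))) := by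
            rw [show ‖(2:ℝ)⁻¹‖ = (2:ℝ)⁻¹ by simp]
            exact mul_le_mul_of_nonneg_left htr (by norm_num)
        _ ≤ K * (2:ℝ) ^ (-(α * ((n:ℝ)+1))) := by rw [inv_mul_eq_div]; exact hnum
    · -- k = 2m+1 odd
      have hm2 : m + 1 ≤ 2 ^ n := by
        have : k ≤ 2 ^ (n+1) := h2
        omega
      have hm1 : 1 ≤ m + 1 := by omega
      have hkc : (k:ℝ) = 2 * m + 1 := by rw [hm]; push_cast; ring
      have e1 : (k:ℝ) * T / 2 ^ (n+1) = (2 * ((m:ℝ)+1) - 1) * T / 2 ^ (n+1) := by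
        rw [hkc]; ring_nf
      have e2 : ((k:ℝ) - 1) * T / 2 ^ (n+1) = (((m:ℝ)+1) - 1) * T / 2 ^ n := by
        rw [hkc]; ring_nf
      rw [e1, e2]
      have hdecomp : ψ ((2 * ((m:ℝ)+1) - 1) * T / 2 ^ (n+1)) - ψ ((((m:ℝ)+1) - 1) * T / 2 ^ n)
          = (2:ℝ)⁻¹ • ((ψ (((m:ℝ)+1) * T / 2 ^ n) - ψ ((((m:ℝ)+1) - 1) * T / 2 ^ n))
            + ((2 : ℝ) • ψ ((2 * ((m:ℝ)+1) - 1) * T / 2 ^ (n+1)) - ψ ((((m:ℝ)+1) - 1) * T / 2 ^ n)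
              - ψ (((m:ℝ)+1) * T / 2 ^ n))) := by
        module
      rw [hdecomp, norm_smul]
      have ihm := ih (m+1) hm1 hm2
      have hXm := hX n (m+1) hm1 hm2
      push_cast at ihm hXm
      have htr : ‖(ψ (((m:ℝ)+1) * T / 2 ^ n) - ψ ((((m:ℝ)+1) - 1) * T / 2 ^ n))
            + ((2 : ℝ) • ψ ((2 * ((m:ℝ)+1) - 1) * T / 2 ^ (n+1)) - ψ ((((m:ℝ)+1) - 1) * T / 2 ^ n)
              - ψ (((m:ℝ)+1) * T / 2 ^ n))‖ ≤ K * (2:ℝ) ^ (-(α * n)) + M * (2:ℝ) ^ (-(α * n)) :=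
        le_trans (norm_add_le _ _) (add_le_add ihm hXm)
      calc ‖(2:ℝ)⁻¹‖ * ‖_‖ ≤ (2:ℝ)⁻¹ * (K * (2:ℝ) ^ (-(α * n)) + M * (2:ℝ) ^ (-(α * n))) := by
            rw [show ‖(2:ℝ)⁻¹‖ = (2:ℝ)⁻¹ by simp]
            exact mul_le_mul_of_nonneg_left htr (by norm_num)
        _ ≤ K * (2:ℝ) ^ (-(α * ((n:ℝ)+1))) := by rw [inv_mul_eq_div]; exact hnum


lemma dyadic_chain (T : ℝ) (α : ℝ) (hα0 : 0 < α)
    (ψ : ℝ → E) (K : ℝ) (hKnn : 0 ≤ K)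
    (hg : ∀ n k : ℕ, 1 ≤ k → k ≤ 2 ^ n →
      ‖ψ ((k:ℝ) * T / 2 ^ n) - ψ (((k:ℝ) - 1) * T / 2 ^ n)‖ ≤ K * (2:ℝ) ^ (-(α * n))) :
    ∀ e n j : ℕ, j ≤ 2 ^ (n + e) →
      ‖ψ ((j:ℝ) * T / 2 ^ (n + e)) - ψ (((j / 2 ^ e : ℕ) : ℝ) * T / 2 ^ n)‖ ≤
        K / ((2:ℝ) ^ α - 1) * (2:ℝ) ^ (-(α * n)) := by
  have h2a : (1:ℝ) < (2:ℝ) ^ α := by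
    apply Real.one_lt_rpow_iff_of_pos (by norm_num) |>.mpr
    exact Or.inl ⟨by norm_num, hα0⟩
  have hden : (0:ℝ) < (2:ℝ) ^ α - 1 := by linarith
  intro e
  induction e with
  | zero =>
    intro n j hj
    simp only [Nat.add_zero, pow_zero, Nat.div_one, sub_self, norm_zero]
    positivity
  | succ e ih =>
    intro n j hj
    have hj' : j ≤ 2 ^ ((n+1) + e) := by
      have : (n+1) + e = n + (e+1) := by omega
      rw [this]; exact hj
    have ih' := ih (n+1) j hj'
    -- relate indices
    set i : ℕ := j / 2 ^ e with hi
    have hii : j / 2 ^ (e+1) = i / 2 := by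
      rw [hi, Nat.div_div_eq_div_mul, ← pow_succ]
    have hi2 : i ≤ 2 ^ (n+1) := by
      calc i ≤ 2 ^ ((n+1)+e) / 2 ^ e := Nat.div_le_div_right hj'
        _ = 2 ^ (n+1) := by
            rw [Nat.pow_div (by omega) (by norm_num)]
            congr 1; omega
    have hpt : ((i / 2 : ℕ) : ℝ) * T / 2 ^ n = (2 * ((i / 2 : ℕ) : ℝ)) * T / 2 ^ (n+1) := by
      ring_nf
    have hexp : ((n:ℝ) + 1 + (e:ℝ)) = ((n:ℝ) + ((e:ℝ)+1)) := by ring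
    have heq : (j:ℝ) * T / 2 ^ ((n+1) + e) = (j:ℝ) * T / 2 ^ (n + (e+1)) := by
      congr 2; omega
    rw [heq] at ih'
    push_cast at ih'
    have hsum : (2:ℝ) ^ (-(α * ((n:ℝ)+1))) * ((2:ℝ)^α) = (2:ℝ) ^ (-(α * n)) := by
      rw [← Real.rpow_add (by norm_num)]; ring_nf
    rcases Nat.even_or_odd i with ⟨m, hm⟩ | ⟨m, hm⟩
    · -- i even: i/2 * 2 = i, grid points coincide at level n+1
      have hieq : i / 2 = m := by omega
      have : ((i / 2 : ℕ) : ℝ) * T / 2 ^ n = (i : ℝ) * T / 2 ^ (n+1) := by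
        rw [hieq]
        have : (i:ℝ) = 2 * m := by rw [hm]; push_cast; ring
        rw [this]; ring_nf
      rw [hii, this]
      refine le_trans ih' ?_
      apply mul_le_mul_of_nonneg_left ?_ (by positivity)
      apply Real.rpow_le_rpow_of_exponent_le (by norm_num)
      push_cast
      nlinarith [hα0]
    · -- i odd: i = 2m+1, i/2 = m, grid points adjacent
      have hieq : i / 2 = m := by omega
      have hstep : ‖ψ ((i:ℝ) * T / 2 ^ (n+1)) - ψ (((i:ℝ) - 1) * T / 2 ^ (n+1))‖ ≤
          K * (2:ℝ) ^ (-(α * ((n:ℝ)+1))) := by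
        have := hg (n+1) i (by omega) hi2
        push_cast at this
        exact this
      have hmpt : (((i:ℝ)) - 1) * T / 2 ^ (n+1) = ((i / 2 : ℕ) : ℝ) * T / 2 ^ n := by
        rw [hieq]
        have : (i:ℝ) = 2 * m + 1 := by rw [hm]; push_cast; ring
        rw [this]; ring_nf
      rw [hii, hieq]
      calc ‖ψ ((j:ℝ) * T / 2 ^ (n + (e+1))) - ψ ((m:ℝ) * T / 2 ^ n)‖
          ≤ ‖ψ ((j:ℝ) * T / 2 ^ (n + (e+1))) - ψ ((i:ℝ) * T / 2 ^ (n+1))‖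
            + ‖ψ ((i:ℝ) * T / 2 ^ (n+1)) - ψ ((m:ℝ) * T / 2 ^ n)‖ := norm_sub_le_norm_sub_add_norm_sub _ _ _
        _ ≤ K / ((2:ℝ) ^ α - 1) * (2:ℝ) ^ (-(α * (n+1))) + K * (2:ℝ) ^ (-(α * (n+1))) := by
            apply add_le_add ih'
            rw [← hieq, ← hmpt]
            exact hstep
        _ = K / ((2:ℝ) ^ α - 1) * (2:ℝ) ^ (-(α * n)) := by
            push_cast
            rw [← hsum]
            field_simp
            ring


lemma dyadic_pair (T : ℝ) (hT : 0 < T) (α : ℝ) (hα : α ∈ Ioo (0:ℝ) 1)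
    (ψ : ℝ → E) (K : ℝ) (hKnn : 0 ≤ K)
    (hg : ∀ n k : ℕ, 1 ≤ k → k ≤ 2 ^ n →
      ‖ψ ((k:ℝ) * T / 2 ^ n) - ψ (((k:ℝ) - 1) * T / 2 ^ n)‖ ≤ K * (2:ℝ) ^ (-(α * n)))
    (hchain : ∀ e n j : ℕ, j ≤ 2 ^ (n + e) →
      ‖ψ ((j:ℝ) * T / 2 ^ (n + e)) - ψ (((j / 2 ^ e : ℕ) : ℝ) * T / 2 ^ n)‖ ≤
        K / ((2:ℝ) ^ α - 1) * (2:ℝ) ^ (-(α * n))) :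
    ∀ N i j : ℕ, i ≤ j → j ≤ 2 ^ N →
      ‖ψ ((j:ℝ) * T / 2 ^ N) - ψ ((i:ℝ) * T / 2 ^ N)‖ ≤
        ((2 * (K / ((2:ℝ) ^ α - 1)) + K) * (2:ℝ) ^ α / T ^ α) *
          (((j:ℝ) - i) * T / 2 ^ N) ^ α := by
  obtain ⟨hα0, hα1⟩ := hα
  have h2a : (1:ℝ) < (2:ℝ) ^ α := by
    apply Real.one_lt_rpow_iff_of_pos (by norm_num) |>.mpr
    exact Or.inl ⟨by norm_num, hα0⟩
  have hden : (0:ℝ) < (2:ℝ) ^ α - 1 := by linarith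
  have hK' : 0 ≤ K / ((2:ℝ) ^ α - 1) := div_nonneg hKnn hden.le
  have hTα : (0:ℝ) < T ^ α := Real.rpow_pos_of_pos hT _
  intro N i j hij hj
  rcases eq_or_lt_of_le hij with rfl | hlt
  · simp [Real.zero_rpow hα0.ne']
  set Δ : ℝ := ((j:ℝ) - i) * T / 2 ^ N with hΔ
  have hΔpos : 0 < Δ := by
    have : (1:ℝ) ≤ (j:ℝ) - i := by
      have : (i:ℝ) + 1 ≤ j := by exact_mod_cast hlt
      linarith
    positivity
  have hΔT : Δ ≤ T := by
    rw [hΔ, div_le_iff₀ (by positivity)]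
    have h1 : (j:ℝ) - i ≤ 2 ^ N := by
      have : (j:ℝ) ≤ 2 ^ N := by exact_mod_cast hj
      have : (0:ℝ) ≤ i := Nat.cast_nonneg i
      linarith
    nlinarith [hT.le]
  have hΔN : T / 2 ^ N ≤ Δ := by
    rw [hΔ]
    have h1 : (1:ℝ) ≤ (j:ℝ) - i := by
      have : (i:ℝ) + 1 ≤ j := by exact_mod_cast hlt
      linarith
    apply div_le_div_of_nonneg_right ?_ (by positivity) |>.trans_eq rfl
    nlinarith [hT.le]
  have hex : ∃ n : ℕ, T / 2 ^ (n+1) < Δ := by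
    refine ⟨N, ?_⟩
    calc T / 2 ^ (N+1) < T / 2 ^ N := by
          apply div_lt_div_of_pos_left hT (by positivity)
          exact pow_lt_pow_right₀ (by norm_num) (by omega)
      _ ≤ Δ := hΔN
  set n := Nat.find hex with hn
  have hfound : T / 2 ^ (n+1) < Δ := Nat.find_spec hex
  have hnN : n ≤ N := Nat.find_le (by
    calc T / 2 ^ (N+1) < T / 2 ^ N := by
          apply div_lt_div_of_pos_left hT (by positivity)
          exact pow_lt_pow_right₀ (by norm_num) (by omega)
      _ ≤ Δ := hΔN)
  have hΔn : Δ ≤ T / 2 ^ n := by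
    match n, hn with
    | 0, hn => simpa using hΔT
    | (m+1), hn =>
      have := Nat.find_min hex (by omega : m < Nat.find hex)
      push_neg at this
      exact this
  -- j - i ≤ 2^(N-n)
  have hji : j - i ≤ 2 ^ (N - n) := by
    have hr : ((j:ℝ) - i) ≤ (2:ℝ) ^ (N - n) := by
      have h1 : ((j:ℝ) - i) * T / 2 ^ N ≤ T / 2 ^ n := hΔn
      have h2 : ((j:ℝ) - i) ≤ (2:ℝ) ^ N / 2 ^ n := by
        rw [div_le_div_iff₀ (by positivity) (by positivity)] at h1
        rw [le_div_iff₀ (by positivity)]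
        nlinarith [hT]
      rw [pow_sub₀ (2:ℝ) (by norm_num) hnN]
      exact h2
    have : ((j - i : ℕ) : ℝ) ≤ ((2 ^ (N - n) : ℕ) : ℝ) := by
      push_cast [Nat.cast_sub hij]
      exact_mod_cast hr
    exact_mod_cast this
  set a := i / 2 ^ (N - n) with ha
  set b := j / 2 ^ (N - n) with hb
  have hab : a ≤ b := Nat.div_le_div_right hij
  have hba : b ≤ a + 1 := by
    have hj' : j ≤ i + 2 ^ (N - n) := by omega
    calc b ≤ (i + 2 ^ (N - n)) / 2 ^ (N - n) := Nat.div_le_div_right hj'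
      _ = a + 1 := Nat.add_div_right i (by positivity)
  have hb2 : b ≤ 2 ^ n := by
    calc b ≤ 2 ^ N / 2 ^ (N - n) := Nat.div_le_div_right hj
      _ = 2 ^ n := by
          rw [Nat.pow_div (by omega) (by norm_num)]
          congr 1; omega
  have hNe : N = n + (N - n) := by omega
  have hcj : ‖ψ ((j:ℝ) * T / 2 ^ N) - ψ ((b:ℝ) * T / 2 ^ n)‖ ≤
      K / ((2:ℝ) ^ α - 1) * (2:ℝ) ^ (-(α * n)) := by
    have := hchain (N - n) n j (by rw [← hNe]; exact hj)
    rw [← hNe] at this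
    exact this
  have hci : ‖ψ ((i:ℝ) * T / 2 ^ N) - ψ ((a:ℝ) * T / 2 ^ n)‖ ≤
      K / ((2:ℝ) ^ α - 1) * (2:ℝ) ^ (-(α * n)) := by
    have := hchain (N - n) n i (by rw [← hNe]; omega)
    rw [← hNe] at this
    exact this
  have hmid : ‖ψ ((b:ℝ) * T / 2 ^ n) - ψ ((a:ℝ) * T / 2 ^ n)‖ ≤ K * (2:ℝ) ^ (-(α * n)) := by
    rcases eq_or_lt_of_le hab with hba' | hlt'
    · rw [← hba']
      simp only [sub_self, norm_zero]
      positivity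
    · have hba' : b = a + 1 := le_antisymm hba hlt'
      rw [hba'] at hb2 ⊢
      have h1 : 1 ≤ a + 1 := Nat.succ_le_succ (Nat.zero_le a)
      have := hg n (a+1) h1 hb2
      push_cast at this ⊢
      convert this using 3
      ring
  have htotal : ‖ψ ((j:ℝ) * T / 2 ^ N) - ψ ((i:ℝ) * T / 2 ^ N)‖ ≤
      (2 * (K / ((2:ℝ) ^ α - 1)) + K) * (2:ℝ) ^ (-(α * n)) := by
    calc ‖ψ ((j:ℝ) * T / 2 ^ N) - ψ ((i:ℝ) * T / 2 ^ N)‖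
        ≤ ‖ψ ((j:ℝ) * T / 2 ^ N) - ψ ((b:ℝ) * T / 2 ^ n)‖
          + ‖ψ ((b:ℝ) * T / 2 ^ n) - ψ ((a:ℝ) * T / 2 ^ n)‖
          + ‖ψ ((a:ℝ) * T / 2 ^ n) - ψ ((i:ℝ) * T / 2 ^ N)‖ := by
            have t1 := norm_sub_le_norm_sub_add_norm_sub (ψ ((j:ℝ) * T / 2 ^ N))
              (ψ ((a:ℝ) * T / 2 ^ n)) (ψ ((i:ℝ) * T / 2 ^ N))
            have t2 := norm_sub_le_norm_sub_add_norm_sub (ψ ((j:ℝ) * T / 2 ^ N))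
              (ψ ((b:ℝ) * T / 2 ^ n)) (ψ ((a:ℝ) * T / 2 ^ n))
            linarith
      _ ≤ K / ((2:ℝ) ^ α - 1) * (2:ℝ) ^ (-(α * n)) + K * (2:ℝ) ^ (-(α * n))
          + K / ((2:ℝ) ^ α - 1) * (2:ℝ) ^ (-(α * n)) := by
            have hci' : ‖ψ ((a:ℝ) * T / 2 ^ n) - ψ ((i:ℝ) * T / 2 ^ N)‖ ≤
                K / ((2:ℝ) ^ α - 1) * (2:ℝ) ^ (-(α * n)) := by
              rw [norm_sub_rev]; exact hci
            exact add_le_add (add_le_add hcj hmid) hci'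
      _ = (2 * (K / ((2:ℝ) ^ α - 1)) + K) * (2:ℝ) ^ (-(α * n)) := by ring
  -- convert 2^{-αn} to Δ^α
  have hpow : (2:ℝ) ^ (-(α * n)) ≤ (2:ℝ) ^ α * Δ ^ α / T ^ α := by
    have hx : (2:ℝ) ^ (-(n:ℝ)) ≤ 2 * Δ / T := by
      rw [Real.rpow_neg (by norm_num), Real.rpow_natCast]
      rw [inv_le_iff_one_le_mul₀ (by positivity)]
      rw [div_lt_iff₀ (by positivity)] at hfound
      rw [div_mul_eq_mul_div, le_div_iff₀ hT]
      have he : (2:ℝ) ^ (n+1) = 2 ^ n * 2 := by ring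
      nlinarith [hfound, he]
    have h1 : ((2:ℝ) ^ (-(n:ℝ))) ^ α ≤ (2 * Δ / T) ^ α :=
      Real.rpow_le_rpow (by positivity) hx hα0.le
    have h2 : ((2:ℝ) ^ (-(n:ℝ))) ^ α = (2:ℝ) ^ (-(α * n)) := by
      rw [← Real.rpow_mul (by norm_num)]
      ring_nf
    have h3 : ((2 * Δ / T) : ℝ) ^ α = (2:ℝ) ^ α * Δ ^ α / T ^ α := by
      rw [Real.div_rpow (by positivity) hT.le, Real.mul_rpow (by norm_num) hΔpos.le]
    rw [← h2, ← h3]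
    exact h1
  calc ‖ψ ((j:ℝ) * T / 2 ^ N) - ψ ((i:ℝ) * T / 2 ^ N)‖
      ≤ (2 * (K / ((2:ℝ) ^ α - 1)) + K) * (2:ℝ) ^ (-(α * n)) := htotal
    _ ≤ (2 * (K / ((2:ℝ) ^ α - 1)) + K) * ((2:ℝ) ^ α * Δ ^ α / T ^ α) :=
        mul_le_mul_of_nonneg_left hpow (by positivity)
    _ = ((2 * (K / ((2:ℝ) ^ α - 1)) + K) * (2:ℝ) ^ α / T ^ α) * Δ ^ α := by ring


lemma holder_extend (T : ℝ) (hT : 0 < T) (α : ℝ) (hα0 : 0 < α)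
    (ψ : ℝ → E) (hc : Continuous ψ) (C₀ : ℝ)
    (hdy : ∀ N i j : ℕ, i ≤ j → j ≤ 2 ^ N →
      ‖ψ ((j:ℝ) * T / 2 ^ N) - ψ ((i:ℝ) * T / 2 ^ N)‖ ≤ C₀ * (((j:ℝ) - i) * T / 2 ^ N) ^ α) :
    ∀ s ∈ Icc (0:ℝ) T, ∀ t ∈ Icc (0:ℝ) T, s ≤ t → ‖ψ t - ψ s‖ ≤ C₀ * (t - s) ^ α := by
  intro s hs t ht hst
  obtain ⟨hs0, hsT⟩ := hs
  obtain ⟨ht0, htT⟩ := ht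
  set i : ℕ → ℕ := fun N => ⌊s * 2 ^ N / T⌋₊ with hidef
  set j : ℕ → ℕ := fun N => ⌊t * 2 ^ N / T⌋₊ with hjdef
  have hp2 : ∀ N : ℕ, (0:ℝ) < 2 ^ N := fun N => by positivity
  have hij : ∀ N, i N ≤ j N := fun N =>
    Nat.floor_le_floor (by gcongr)
  have hj2 : ∀ N, j N ≤ 2 ^ N := by
    intro N
    have h1 : t * 2 ^ N / T ≤ ((2 ^ N : ℕ) : ℝ) := by
      push_cast
      rw [div_le_iff₀ hT]
      nlinarith [hp2 N]
    calc j N ≤ ⌊((2 ^ N : ℕ) : ℝ)⌋₊ := Nat.floor_le_floor h1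
      _ = 2 ^ N := Nat.floor_natCast _
  -- convergence of dyadic approximations
  have happrox : ∀ (x : ℝ), 0 ≤ x → x ≤ T →
      Tendsto (fun N : ℕ => ((⌊x * 2 ^ N / T⌋₊ : ℝ) * T / 2 ^ N)) atTop (𝓝 x) := by
    intro x hx0 hxT
    rw [tendsto_iff_dist_tendsto_zero]
    have hbound : ∀ N : ℕ, dist ((⌊x * 2 ^ N / T⌋₊ : ℝ) * T / 2 ^ N) x ≤ T / 2 ^ N := by
      intro N
      have hnn : 0 ≤ x * 2 ^ N / T := by positivity
      have hfl : ((⌊x * 2 ^ N / T⌋₊ : ℝ)) ≤ x * 2 ^ N / T := Nat.floor_le hnn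
      have hfu : x * 2 ^ N / T < (⌊x * 2 ^ N / T⌋₊ : ℝ) + 1 := Nat.lt_floor_add_one _
      have k1 : ((⌊x * 2 ^ N / T⌋₊ : ℝ)) * T / 2 ^ N ≤ x := by
        rw [div_le_iff₀ (hp2 N)]
        calc ((⌊x * 2 ^ N / T⌋₊ : ℝ)) * T ≤ (x * 2 ^ N / T) * T :=
              mul_le_mul_of_nonneg_right hfl hT.le
          _ = x * 2 ^ N := by field_simp
      have k2 : x < ((⌊x * 2 ^ N / T⌋₊ : ℝ)) * T / 2 ^ N + T / 2 ^ N := by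
        rw [← add_div, lt_div_iff₀ (hp2 N)]
        calc x * 2 ^ N = (x * 2 ^ N / T) * T := by field_simp
          _ < ((⌊x * 2 ^ N / T⌋₊ : ℝ) + 1) * T := by nlinarith [hfu, hT]
          _ = (⌊x * 2 ^ N / T⌋₊ : ℝ) * T + T := by ring
      have hTN : (0:ℝ) ≤ T / 2 ^ N := by positivity
      rw [Real.dist_eq, abs_le]
      constructor <;> linarith
    have hto : Tendsto (fun N : ℕ => T / 2 ^ N) atTop (𝓝 0) := by
      have : Tendsto (fun N : ℕ => T * (1/2 : ℝ) ^ N) atTop (𝓝 (T * 0)) :=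
        (tendsto_pow_atTop_nhds_zero_of_lt_one (by norm_num) (by norm_num)).const_mul T
      simpa [div_eq_mul_inv, inv_pow] using this
    exact squeeze_zero (fun N => dist_nonneg) hbound hto
  have hsN : Tendsto (fun N : ℕ => ((i N : ℝ) * T / 2 ^ N)) atTop (𝓝 s) := happrox s hs0 hsT
  have htN : Tendsto (fun N : ℕ => ((j N : ℝ) * T / 2 ^ N)) atTop (𝓝 t) := happrox t ht0 htT
  -- limit of both sides
  have hLHS : Tendsto (fun N : ℕ => ‖ψ ((j N : ℝ) * T / 2 ^ N) - ψ ((i N : ℝ) * T / 2 ^ N)‖)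
      atTop (𝓝 ‖ψ t - ψ s‖) :=
    (((hc.tendsto t).comp htN).sub ((hc.tendsto s).comp hsN)).norm
  have hRHS : Tendsto (fun N : ℕ => C₀ * (((j N : ℝ) * T / 2 ^ N) - ((i N : ℝ) * T / 2 ^ N)) ^ α)
      atTop (𝓝 (C₀ * (t - s) ^ α)) := by
    have h1 : Tendsto (fun N : ℕ => ((j N : ℝ) * T / 2 ^ N) - ((i N : ℝ) * T / 2 ^ N))
        atTop (𝓝 (t - s)) := htN.sub hsN
    have h2 : ContinuousAt (fun x : ℝ => x ^ α) (t - s) :=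
      Real.continuousAt_rpow_const _ _ (Or.inr hα0.le)
    exact (h2.tendsto.comp h1).const_mul C₀
  refine le_of_tendsto_of_tendsto' hLHS hRHS ?_
  intro N
  have := hdy N (i N) (j N) (hij N) (hj2 N)
  calc ‖ψ ((j N : ℝ) * T / 2 ^ N) - ψ ((i N : ℝ) * T / 2 ^ N)‖
      ≤ C₀ * (((j N : ℝ) - i N) * T / 2 ^ N) ^ α := this
    _ = C₀ * (((j N : ℝ) * T / 2 ^ N) - ((i N : ℝ) * T / 2 ^ N)) ^ α := by
        congr 2
        ring

end CiesielskiAux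

lemma coef_norm {d : ℕ} (T : ℝ) (hT : 0 < T) (α : ℝ)
    (ψ : ℝ → EuclideanSpace ℝ (Fin d)) (p m : ℕ) :
    (2 : ℝ) ^ ((α - 1 / 2) * p) * ‖schauderCoef T ψ p m‖ =
      (2 : ℝ) ^ (α * (p:ℝ)) / Real.sqrt T *
        ‖(2 : ℝ) • ψ ((2 * (m : ℝ) - 1) * T / 2 ^ (p + 1))
          - ψ (((m : ℝ) - 1) * T / 2 ^ p) - ψ ((m : ℝ) * T / 2 ^ p)‖ := by
  rw [schauderCoef, norm_smul, Real.norm_eq_abs, abs_of_nonneg (Real.sqrt_nonneg _)]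
  have hsq : Real.sqrt ((2:ℝ) ^ p / T) = (2:ℝ) ^ ((p:ℝ)/2) / Real.sqrt T := by
    rw [Real.sqrt_div (by positivity : (0:ℝ) ≤ (2:ℝ) ^ p) T]
    congr 1
    rw [Real.sqrt_eq_rpow, ← Real.rpow_natCast 2 p, ← Real.rpow_mul (by norm_num)]
    congr 1
    ring
  rw [hsq]
  have h12 : (2:ℝ) ^ ((α - 1/2) * (p:ℝ)) * (2:ℝ) ^ ((p:ℝ)/2) = (2:ℝ) ^ (α * (p:ℝ)) := by
    rw [← Real.rpow_add (by norm_num)]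
    ring_nf
  calc (2:ℝ) ^ ((α - 1/2) * (p:ℝ)) * ((2:ℝ) ^ ((p:ℝ)/2) / Real.sqrt T * ‖_‖)
      = ((2:ℝ) ^ ((α - 1/2) * (p:ℝ)) * (2:ℝ) ^ ((p:ℝ)/2)) / Real.sqrt T * ‖_‖ := by ring
    _ = (2 : ℝ) ^ (α * (p:ℝ)) / Real.sqrt T * ‖_‖ := by rw [h12]

/-- Ciesielski isomorphism: for continuous paths `ψ : [0,T] → ℝ^{d'}` with
`ψ 0 = 0`, the `α`-Hölder norm and the wavelet norm
`sup_{(p,m)∈Λ} 2^{(α−1/2)p} |ψ_{pm}|` are equivalent up to constants `c, C` independent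
of `ψ`: a bound `B` on one of the two quantities controls the other. -/
theorem ciesielski_isomorphism (T : ℝ) (hT : 0 < T) (α : ℝ) (hα : α ∈ Ioo (0 : ℝ) 1)
    (d : ℕ) :
    ∃ c C : ℝ, 0 < c ∧ 0 < C ∧
      ∀ ψ : ℝ → EuclideanSpace ℝ (Fin d), Continuous ψ → ψ 0 = 0 →
        ∀ B : ℝ, 0 ≤ B →
          -- wavelet bound implies Hölder bound
          (((‖ψ T - ψ 0‖ ≤ B) ∧
              (∀ p m : ℕ, 1 ≤ m → m ≤ 2 ^ p →
                (2 : ℝ) ^ ((α - 1 / 2) * p) * ‖schauderCoef T ψ p m‖ ≤ B)) →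
            ∀ s ∈ Icc 0 T, ∀ t ∈ Icc 0 T, ‖ψ t - ψ s‖ ≤ C * B * |t - s| ^ α)
          ∧
          -- Hölder bound implies wavelet bound
          ((∀ s ∈ Icc 0 T, ∀ t ∈ Icc 0 T, ‖ψ t - ψ s‖ ≤ B * |t - s| ^ α) →
            (c * ‖ψ T - ψ 0‖ ≤ B ∧
              ∀ p m : ℕ, 1 ≤ m → m ≤ 2 ^ p →
                c * ((2 : ℝ) ^ ((α - 1 / 2) * p) * ‖schauderCoef T ψ p m‖) ≤ B)) := by
  obtain ⟨hα0, hα1⟩ := hα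
  have hsT : (0:ℝ) < Real.sqrt T := Real.sqrt_pos.mpr hT
  have hden1 : (0:ℝ) < (2:ℝ) ^ (1 - α) - 1 := by
    have : (1:ℝ) < (2:ℝ) ^ (1 - α) := by
      apply Real.one_lt_rpow_iff_of_pos (by norm_num) |>.mpr
      exact Or.inl ⟨by norm_num, by linarith⟩
    linarith
  have hden2 : (0:ℝ) < (2:ℝ) ^ α - 1 := by
    have : (1:ℝ) < (2:ℝ) ^ α := by
      apply Real.one_lt_rpow_iff_of_pos (by norm_num) |>.mpr
      exact Or.inl ⟨by norm_num, hα0⟩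
    linarith
  have hTα : (0:ℝ) < T ^ α := Real.rpow_pos_of_pos hT _
  obtain ⟨K₁, hK₁def⟩ : ∃ x : ℝ, x = 1 + Real.sqrt T / ((2:ℝ) ^ (1 - α) - 1) := ⟨_, rfl⟩
  have hK₁ : 0 < K₁ := by
    have : 0 < Real.sqrt T / ((2:ℝ) ^ (1 - α) - 1) := div_pos hsT hden1
    rw [hK₁def]; linarith
  obtain ⟨C, hCdef⟩ : ∃ x : ℝ, x = (2 * (K₁ / ((2:ℝ) ^ α - 1)) + K₁) * (2:ℝ) ^ α / T ^ α :=
    ⟨_, rfl⟩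
  obtain ⟨c, hcdef⟩ : ∃ x : ℝ, x = min (T ^ (-α)) ((2:ℝ) ^ (α - 1) * T ^ ((1:ℝ)/2 - α)) :=
    ⟨_, rfl⟩
  have hc : 0 < c := hcdef ▸ lt_min (Real.rpow_pos_of_pos hT _)
    (mul_pos (Real.rpow_pos_of_pos (by norm_num) _) (Real.rpow_pos_of_pos hT _))
  have hC : 0 < C := by
    have h1 : 0 < K₁ / ((2:ℝ) ^ α - 1) := div_pos hK₁ hden2
    have h2 : 0 < (2:ℝ) ^ α := Real.rpow_pos_of_pos (by norm_num) _
    rw [hCdef]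
    have : 0 < 2 * (K₁ / ((2:ℝ) ^ α - 1)) + K₁ := by linarith
    positivity
  refine ⟨c, C, hc, hC, ?_⟩
  intro ψ hcont hψ0 B hB
  constructor
  · -- wavelet ⇒ Hölder
    rintro ⟨h0, hcoef⟩ s hs t ht
    have hX : ∀ p m : ℕ, 1 ≤ m → m ≤ 2 ^ p →
        ‖(2 : ℝ) • ψ ((2 * (m:ℝ) - 1) * T / 2 ^ (p+1)) - ψ (((m:ℝ) - 1) * T / 2 ^ p)
          - ψ ((m:ℝ) * T / 2 ^ p)‖ ≤ (B * Real.sqrt T) * (2:ℝ) ^ (-(α * (p:ℝ))) := by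
      intro p m h1 h2
      have h := hcoef p m h1 h2
      rw [coef_norm T hT α ψ p m] at h
      have hone : (2:ℝ) ^ (-(α * (p:ℝ))) * (2:ℝ) ^ (α * (p:ℝ)) = 1 := by
        rw [← Real.rpow_add (by norm_num)]; norm_num
      set X := (2 : ℝ) • ψ ((2 * (m:ℝ) - 1) * T / 2 ^ (p+1)) - ψ (((m:ℝ) - 1) * T / 2 ^ p)
          - ψ ((m:ℝ) * T / 2 ^ p) with hXdef
      have e1 : (Real.sqrt T * (2:ℝ) ^ (-(α * (p:ℝ)))) *
            ((2:ℝ) ^ (α * (p:ℝ)) / Real.sqrt T * ‖X‖)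
          = ((2:ℝ) ^ (-(α * (p:ℝ))) * (2:ℝ) ^ (α * (p:ℝ))) * (Real.sqrt T / Real.sqrt T)
            * ‖X‖ := by ring
      calc ‖X‖ = (Real.sqrt T * (2:ℝ) ^ (-(α * (p:ℝ)))) *
            ((2:ℝ) ^ (α * (p:ℝ)) / Real.sqrt T * ‖X‖) := by
              rw [e1, hone, div_self hsT.ne']; ring
        _ ≤ (Real.sqrt T * (2:ℝ) ^ (-(α * (p:ℝ)))) * B :=
              mul_le_mul_of_nonneg_left h (by positivity)
        _ = (B * Real.sqrt T) * (2:ℝ) ^ (-(α * (p:ℝ))) := by ring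
    have hstep := dyadic_step T hT α ⟨hα0, hα1⟩ ψ B (B * Real.sqrt T) (by positivity) h0 hX
    have hKBnn : 0 ≤ B + B * Real.sqrt T / ((2:ℝ) ^ (1 - α) - 1) := by
      have : 0 ≤ B * Real.sqrt T / ((2:ℝ) ^ (1 - α) - 1) :=
        div_nonneg (by positivity) hden1.le
      linarith
    have hchain := dyadic_chain T α hα0 ψ _ hKBnn hstep
    have hpair := dyadic_pair T hT α ⟨hα0, hα1⟩ ψ _ hKBnn hstep hchain
    have hext := holder_extend T hT α hα0 ψ hcont _ hpair
    have hCB : (2 * ((B + B * Real.sqrt T / ((2:ℝ) ^ (1 - α) - 1)) / ((2:ℝ) ^ α - 1))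
          + (B + B * Real.sqrt T / ((2:ℝ) ^ (1 - α) - 1))) * (2:ℝ) ^ α / T ^ α = C * B := by
      rw [hCdef, hK₁def]
      field_simp
    rcases le_total s t with hst | hts
    · have := hext s hs t ht hst
      rw [hCB] at this
      rw [abs_of_nonneg (by linarith : (0:ℝ) ≤ t - s)]
      calc ‖ψ t - ψ s‖ ≤ C * B * (t - s) ^ α := this
        _ = C * B * (t - s) ^ α := rfl
    · have := hext t ht s hs hts
      rw [hCB] at this
      rw [norm_sub_rev, abs_sub_comm, abs_of_nonneg (by linarith : (0:ℝ) ≤ s - t)]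
      exact this
  · -- Hölder ⇒ wavelet
    intro hH
    constructor
    · have h1 : ‖ψ T - ψ 0‖ ≤ B * T ^ α := by
        have := hH 0 ⟨le_refl 0, hT.le⟩ T ⟨hT.le, le_refl T⟩
        rwa [sub_zero, abs_of_pos hT] at this
      have hc1 : c ≤ T ^ (-α) := hcdef ▸ min_le_left _ _
      calc c * ‖ψ T - ψ 0‖ ≤ T ^ (-α) * (B * T ^ α) :=
            mul_le_mul hc1 h1 (norm_nonneg _) (Real.rpow_pos_of_pos hT _).le
        _ = B * (T ^ (-α) * T ^ α) := by ring
        _ = B := by rw [← Real.rpow_add hT]; norm_num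
    · intro p m h1 h2
      rw [coef_norm T hT α ψ p m]
      have hm1 : (1:ℝ) ≤ (m:ℝ) := by exact_mod_cast h1
      have hm2 : (m:ℝ) ≤ 2 ^ p := by exact_mod_cast h2
      have hp2 : (0:ℝ) < 2 ^ p := by positivity
      have hp2' : (0:ℝ) < 2 ^ (p+1) := by positivity
      have hpe : (2:ℝ) ^ (p+1) = 2 * 2 ^ p := by ring
      have ht0 : ((m:ℝ) - 1) * T / 2 ^ p ∈ Icc (0:ℝ) T := by
        constructor
        · exact div_nonneg (mul_nonneg (by linarith) hT.le) hp2.le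
        · rw [div_le_iff₀ hp2]; nlinarith
      have ht1 : (2 * (m:ℝ) - 1) * T / 2 ^ (p+1) ∈ Icc (0:ℝ) T := by
        constructor
        · exact div_nonneg (mul_nonneg (by linarith) hT.le) hp2'.le
        · rw [div_le_iff₀ hp2', hpe]; nlinarith
      have ht2 : (m:ℝ) * T / 2 ^ p ∈ Icc (0:ℝ) T := by
        constructor
        · positivity
        · rw [div_le_iff₀ hp2]; nlinarith
      have hgap1 : (2 * (m:ℝ) - 1) * T / 2 ^ (p+1) - ((m:ℝ) - 1) * T / 2 ^ p = T / 2 ^ (p+1) := by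
        field_simp
        ring
      have hgap2 : (m:ℝ) * T / 2 ^ p - (2 * (m:ℝ) - 1) * T / 2 ^ (p+1) = T / 2 ^ (p+1) := by
        field_simp
        ring
      have hXa := hH _ ht0 _ ht1
      have hXb := hH _ ht1 _ ht2
      rw [hgap1, abs_of_pos (by positivity)] at hXa
      rw [hgap2, abs_of_pos (by positivity)] at hXb
      set X := (2 : ℝ) • ψ ((2 * (m:ℝ) - 1) * T / 2 ^ (p+1)) - ψ (((m:ℝ) - 1) * T / 2 ^ p)
          - ψ ((m:ℝ) * T / 2 ^ p) with hXdef
      have hXn : ‖X‖ ≤ 2 * B * (T / 2 ^ (p+1)) ^ α := by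
        have hXsplit : X = (ψ ((2 * (m:ℝ) - 1) * T / 2 ^ (p+1)) - ψ (((m:ℝ) - 1) * T / 2 ^ p))
            - (ψ ((m:ℝ) * T / 2 ^ p) - ψ ((2 * (m:ℝ) - 1) * T / 2 ^ (p+1))) := by
          rw [hXdef]; module
        rw [hXsplit]
        refine le_trans (norm_sub_le _ _) ?_
        linarith
      have hTpow : (T / 2 ^ (p+1) : ℝ) ^ α = T ^ α / (2:ℝ) ^ (((p:ℝ)+1) * α) := by
        rw [Real.div_rpow hT.le (by positivity)]
        congr 1
        rw [← Real.rpow_natCast 2 (p+1), ← Real.rpow_mul (by norm_num)]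
        congr 1
        push_cast
        ring
      have hQ : (2:ℝ) ^ (α * (p:ℝ)) / Real.sqrt T * ‖X‖ ≤
          (2:ℝ) ^ (α * (p:ℝ)) / Real.sqrt T * (2 * B * (T ^ α / (2:ℝ) ^ (((p:ℝ)+1) * α))) := by
        apply mul_le_mul_of_nonneg_left ?_ (by positivity)
        rw [← hTpow]
        exact hXn
      have hc2 : c ≤ (2:ℝ) ^ (α - 1) * T ^ ((1:ℝ)/2 - α) := hcdef ▸ min_le_right _ _
      have heq : ((2:ℝ) ^ (α - 1) * T ^ ((1:ℝ)/2 - α)) *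
          ((2:ℝ) ^ (α * (p:ℝ)) / Real.sqrt T * (2 * B * (T ^ α / (2:ℝ) ^ (((p:ℝ)+1) * α)))) = B := by
        rw [Real.sqrt_eq_rpow]
        have br1 : (2:ℝ) ^ (α - 1) * (2:ℝ) ^ (α * (p:ℝ)) * 2 / (2:ℝ) ^ (((p:ℝ)+1) * α) = 1 := by
          rw [show (2:ℝ) ^ (α - 1) * (2:ℝ) ^ (α * (p:ℝ)) = (2:ℝ) ^ ((α - 1) + α * (p:ℝ)) from
            (Real.rpow_add (by norm_num) _ _).symm]
          rw [show ((2:ℝ) ^ ((α - 1) + α * (p:ℝ)) * 2 : ℝ) = (2:ℝ) ^ ((α - 1) + α * (p:ℝ) + 1) from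
            (Real.rpow_add_one (by norm_num) _).symm]
          rw [← Real.rpow_sub (by norm_num)]
          rw [show (α - 1) + α * (p:ℝ) + 1 - ((p:ℝ)+1) * α = 0 by ring]
          exact Real.rpow_zero 2
        have br2 : T ^ ((1:ℝ)/2 - α) * T ^ α / T ^ ((1:ℝ)/2) = 1 := by
          rw [show T ^ ((1:ℝ)/2 - α) * T ^ α = T ^ (((1:ℝ)/2 - α) + α) from
            (Real.rpow_add hT _ _).symm]
          rw [← Real.rpow_sub hT]
          rw [show ((1:ℝ)/2 - α) + α - (1:ℝ)/2 = 0 by ring]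
          exact Real.rpow_zero T
        calc ((2:ℝ) ^ (α - 1) * T ^ ((1:ℝ)/2 - α)) *
              ((2:ℝ) ^ (α * (p:ℝ)) / T ^ ((1:ℝ)/2) * (2 * B * (T ^ α / (2:ℝ) ^ (((p:ℝ)+1) * α))))
            = B * ((2:ℝ) ^ (α - 1) * (2:ℝ) ^ (α * (p:ℝ)) * 2 / (2:ℝ) ^ (((p:ℝ)+1) * α))
              * (T ^ ((1:ℝ)/2 - α) * T ^ α / T ^ ((1:ℝ)/2)) := by ring
          _ = B := by rw [br1, br2]; ring
      calc c * ((2:ℝ) ^ (α * (p:ℝ)) / Real.sqrt T * ‖X‖)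
          ≤ ((2:ℝ) ^ (α - 1) * T ^ ((1:ℝ)/2 - α)) *
            ((2:ℝ) ^ (α * (p:ℝ)) / Real.sqrt T * (2 * B * (T ^ α / (2:ℝ) ^ (((p:ℝ)+1) * α)))) := by
            apply mul_le_mul hc2 hQ (by positivity) (by positivity)
        _ = B := heq
end

section
/- For any control ω on [0,T] and β > 0, the accumulated β-local ω-variation M_β(ω) = sup { Σ_i ω(t_i, t_{i+1}) : partitions (t_i) of [0,T] with ω(t_i, t_{i+1}) ≤ β for all i } satisfies β · N_β(ω) ≤ M_β(ω) ≤ β (2 N_β(ω) + 1), where N_β(ω) is the number of elements of the greedy sequence strictly before T. -/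
open Set

/-- The greedy sequence of a control `ω` at level `β` on `[0,T]`:
`τ_0 = 0`, `τ_{i+1} = inf{t > τ_i : ω(τ_i,t) ≥ β} ∧ T`. -/
noncomputable def greedySeq (ω : ℝ → ℝ → ℝ) (β T : ℝ) : ℕ → ℝ
  | 0 => 0
  | i + 1 => sInf ({t : ℝ | greedySeq ω β T i < t ∧ β ≤ ω (greedySeq ω β T i) t} ∩
      Icc 0 T ∪ {T})

/-- The accumulated `β`-local `ω`-variation
`M_β(ω) = sup { Σ_i ω(t_i,t_{i+1}) : partitions of [0,T] with ω(t_i,t_{i+1}) ≤ β }`. -/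
noncomputable def accVar (ω : ℝ → ℝ → ℝ) (β T : ℝ) : ℝ :=
  sSup {v : ℝ | ∃ n : ℕ, ∃ t : Fin (n + 1) → ℝ,
    Monotone t ∧ t 0 = 0 ∧ t (Fin.last n) = T ∧
    (∀ i : Fin n, ω (t i.castSucc) (t i.succ) ≤ β) ∧
    v = ∑ i : Fin n, ω (t i.castSucc) (t i.succ)}

/-- `β N_β(ω) ≤ M_β(ω) ≤ β (2 N_β(ω) + 1)`, where `N_β(ω)` is the number of
greedy-sequence points strictly before `T`. -/
theorem accVar_greedy_bounds
    (T β : ℝ) (hT : 0 < T) (hβ : 0 < β) (ω : ℝ → ℝ → ℝ)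
    (hcont : ContinuousOn (fun st : ℝ × ℝ => ω st.1 st.2)
      {st : ℝ × ℝ | 0 ≤ st.1 ∧ st.1 ≤ st.2 ∧ st.2 ≤ T})
    (hnonneg : ∀ s t, 0 ≤ s → s ≤ t → t ≤ T → 0 ≤ ω s t)
    (hsuper : ∀ s t u, 0 ≤ s → s ≤ t → t ≤ u → u ≤ T → ω s t + ω t u ≤ ω s u)
    (hdiag : ∀ t, 0 ≤ t → t ≤ T → ω t t = 0)
    (N : ℕ)
    -- `N = N_β(ω) = sup{n : τ_n < T}`
    (hN₁ : ∀ i ≤ N, greedySeq ω β T i < T)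
    (hN₂ : greedySeq ω β T (N + 1) = T) :
    β * N ≤ accVar ω β T ∧ accVar ω β T ≤ β * (2 * N + 1) := by
  classical
  set τ : ℕ → ℝ := greedySeq ω β T with hτ
  have hτ0 : τ 0 = 0 := rfl
  have hstep : ∀ i : ℕ, τ (i + 1) =
      sInf ({t : ℝ | τ i < t ∧ β ≤ ω (τ i) t} ∩ Icc 0 T ∪ {T}) := fun i => rfl
  -- basic range facts
  have hrange : ∀ i, 0 ≤ τ i ∧ τ i ≤ T := by
    intro i
    induction i with
    | zero => exact ⟨le_refl 0, hT.le⟩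
    | succ i ih =>
      constructor
      · rw [hstep i]
        apply le_csInf ⟨T, Or.inr rfl⟩
        rintro x (⟨_, hx1, _⟩ | rfl)
        · exact hx1
        · exact hT.le
      · rw [hstep i]
        exact csInf_le ⟨0, by rintro x (⟨_, hx1, _⟩ | rfl); exacts [hx1, hT.le]⟩ (Or.inr rfl)
  have hmono : ∀ i, τ i ≤ τ (i + 1) := by
    intro i
    rw [hstep i]
    apply le_csInf ⟨T, Or.inr rfl⟩
    rintro x (⟨hx1, _⟩ | rfl)
    · exact hx1.1.le
    · exact (hrange i).2
  have hτmono : Monotone τ := monotone_nat_of_le_succ hmono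
  -- monotonicity of ω
  have hmonoω₁ : ∀ s t u, 0 ≤ s → s ≤ t → t ≤ u → u ≤ T → ω s t ≤ ω s u := by
    intro s t u h0 h1 h2 h3
    have h4 := hsuper s t u h0 h1 h2 h3
    have h5 := hnonneg t u (h0.trans h1) h2 h3
    linarith
  -- continuity of slices
  have hslice : ∀ i, ContinuousOn (fun t => ω (τ i) t) (Icc (τ i) T) := by
    intro i
    apply hcont.comp (Continuous.continuousOn (by fun_prop) :
      ContinuousOn (fun t : ℝ => ((τ i : ℝ), t)) (Icc (τ i) T))
    intro t ht
    exact ⟨(hrange i).1, ht.1, ht.2⟩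
  -- key upper estimate : ω (τ i) (τ (i+1)) ≤ β
  have hkey_le : ∀ i, ω (τ i) (τ (i + 1)) ≤ β := by
    intro i
    rcases eq_or_lt_of_le (hmono i) with h | h
    · rw [← h, hdiag _ (hrange i).1 (hrange i).2]; exact hβ.le
    · have hlt : ∀ t ∈ Ico (τ i) (τ (i + 1)), ω (τ i) t ≤ β := by
        rintro t ⟨ht1, ht2⟩
        rcases eq_or_lt_of_le ht1 with h' | h'
        · rw [← h', hdiag _ (hrange i).1 (hrange i).2]; exact hβ.le
        · by_contra hc
          push_neg at hc
          have htT : t ≤ T := ht2.le.trans (hrange (i + 1)).2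
          have : τ (i + 1) ≤ t := by
            rw [hstep i]
            exact csInf_le ⟨0, by rintro x (⟨_, hx1, _⟩ | rfl); exacts [hx1, hT.le]⟩
              (Or.inl ⟨⟨h', hc.le⟩, (hrange i).1.trans h'.le, htT⟩)
          linarith
      have hct : ContinuousWithinAt (fun t => ω (τ i) t) (Icc (τ i) T) (τ (i + 1)) :=
        (hslice i).continuousWithinAt ⟨hmono i, (hrange (i + 1)).2⟩
      have htend : Filter.Tendsto (fun t => ω (τ i) t) (nhdsWithin (τ (i + 1)) (Ico (τ i) (τ (i + 1))))
          (nhds (ω (τ i) (τ (i + 1)))) :=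
        hct.mono_left (nhdsWithin_mono _ (fun x hx => ⟨hx.1, hx.2.le.trans (hrange (i + 1)).2⟩))
      haveI : (nhdsWithin (τ (i + 1)) (Ico (τ i) (τ (i + 1)))).NeBot := right_nhdsWithin_Ico_neBot h
      exact le_of_tendsto htend (eventually_nhdsWithin_of_forall hlt)
  -- key lower estimate : β ≤ ω (τ i) (τ (i+1)) when τ (i+1) < T
  have hkey_ge : ∀ i, τ (i + 1) < T → β ≤ ω (τ i) (τ (i + 1)) := by
    intro i hltT
    set S := {t : ℝ | τ i < t ∧ β ≤ ω (τ i) t} ∩ Icc 0 T with hS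
    have hbdd : BddBelow S := ⟨0, fun x hx => hx.2.1⟩
    have hSne : S.Nonempty := by
      by_contra h
      rw [not_nonempty_iff_eq_empty] at h
      have : τ (i + 1) = T := by rw [hstep i, ← hS, h, empty_union, csInf_singleton]
      linarith
    have hinf : τ (i + 1) = min (sInf S) T := by
      rw [hstep i, ← hS, csInf_union hbdd hSne (bddBelow_singleton) (singleton_nonempty T),
        csInf_singleton] <;> rfl
    have hinfS : τ (i + 1) = sInf S := by
      rcases le_total (sInf S) T with h | h
      · rw [hinf, min_eq_left h]
      · rw [hinf, min_eq_right h] at hltT ⊢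
        linarith
    have hclos : τ (i + 1) ∈ closure S := hinfS ▸ csInf_mem_closure hSne hbdd
    haveI : (nhdsWithin (τ (i + 1)) S).NeBot := mem_closure_iff_nhdsWithin_neBot.mp hclos
    have hct : ContinuousWithinAt (fun t => ω (τ i) t) (Icc (τ i) T) (τ (i + 1)) :=
      (hslice i).continuousWithinAt ⟨hmono i, (hrange (i + 1)).2⟩
    have htend : Filter.Tendsto (fun t => ω (τ i) t) (nhdsWithin (τ (i + 1)) S)
        (nhds (ω (τ i) (τ (i + 1)))) :=
      hct.mono_left (nhdsWithin_mono _ (fun x hx => ⟨hx.1.1.le, hx.2.2⟩))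
    exact ge_of_tendsto htend (eventually_nhdsWithin_of_forall fun x hx => hx.1.2)
  -- index function
  set idx : ℝ → ℕ := fun x => Nat.findGreatest (fun i => τ i ≤ x) N with hidx
  have hidxle : ∀ x, idx x ≤ N := fun x => Nat.findGreatest_le N
  have hidxτ : ∀ x, 0 ≤ x → τ (idx x) ≤ x := by
    intro x hx
    exact Nat.findGreatest_spec (P := fun i => τ i ≤ x) (Nat.zero_le N) (by show τ 0 ≤ x; rw [hτ0]; exact hx)
  have hidx_ub : ∀ x, x ≤ T → x ≤ τ (idx x + 1) := by
    intro x hx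
    by_cases h : idx x = N
    · rw [h]
      exact hx.trans_eq hN₂.symm
    · have h1 : idx x + 1 ≤ N := Nat.succ_le_of_lt (lt_of_le_of_ne (hidxle x) h)
      have h2 := Nat.findGreatest_is_greatest (Nat.lt_succ_self (idx x)) h1
      exact (not_le.mp h2).le
  have hidxmono : ∀ x y, 0 ≤ x → x ≤ y → idx x ≤ idx y := fun x y hx hxy =>
    Nat.le_findGreatest (hidxle x) ((hidxτ x hx).trans hxy)
  have hG : ∀ x, 0 ≤ x → x ≤ T → ω (τ (idx x)) x ≤ β := by
    intro x h0 h1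
    calc ω (τ (idx x)) x ≤ ω (τ (idx x)) (τ (idx x + 1)) :=
          hmonoω₁ _ _ _ (hrange _).1 (hidxτ x h0) (hidx_ub x h1) (hrange _).2
      _ ≤ β := hkey_le _
  have hGnn : ∀ x, 0 ≤ x → x ≤ T → 0 ≤ ω (τ (idx x)) x := fun x h0 h1 =>
    hnonneg _ _ (hrange _).1 (hidxτ x h0) h1
  -- upper bound for every admissible partition sum
  have hub : ∀ v ∈ {v : ℝ | ∃ n : ℕ, ∃ t : Fin (n + 1) → ℝ,
      Monotone t ∧ t 0 = 0 ∧ t (Fin.last n) = T ∧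
      (∀ i : Fin n, ω (t i.castSucc) (t i.succ) ≤ β) ∧
      v = ∑ i : Fin n, ω (t i.castSucc) (t i.succ)}, v ≤ β * (2 * N + 1) := by
    rintro v ⟨n, t, htm, ht0, htl, hββ, rfl⟩
    set u : ℕ → ℝ := fun k => t ⟨min k n, Nat.lt_succ_of_le (min_le_right k n)⟩ with hu
    have hu0 : u 0 = 0 := by
      rw [hu]
      convert ht0 using 2
      simp
    have hun : u n = T := by
      rw [hu]
      convert htl using 2
      simp [Fin.last]
    have humono : ∀ k l, k ≤ l → u k ≤ u l := fun k l h =>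
      htm (show (⟨min k n, _⟩ : Fin (n + 1)) ≤ ⟨min l n, _⟩ from
        Fin.mk_le_mk.mpr (min_le_min h (le_refl n)))
    have hu0le : ∀ k, 0 ≤ u k := fun k => hu0 ▸ humono 0 k (Nat.zero_le k)
    have huT : ∀ k, u k ≤ T := by
      intro k
      rw [← htl]
      exact htm (show (⟨min k n, _⟩ : Fin (n + 1)) ≤ Fin.last n from
        Fin.mk_le_mk.mpr (min_le_right k n))
    have hueq : ∀ k (hk : k ≤ n), u k = t ⟨k, Nat.lt_succ_of_le hk⟩ := by
      intro k hk
      exact congrArg t (Fin.mk_eq_mk.mpr (min_eq_left hk))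
    have hustep : ∀ k, k < n → ω (u k) (u (k + 1)) ≤ β := by
      intro k hk
      have e1 := hueq k hk.le
      have e2 := hueq (k + 1) (Nat.succ_le_of_lt hk)
      rw [e1, e2]
      exact hββ ⟨k, hk⟩
    have hsum : ∑ i : Fin n, ω (t i.castSucc) (t i.succ)
        = ∑ k ∈ Finset.range n, ω (u k) (u (k + 1)) := by
      rw [← Fin.sum_univ_eq_sum_range (fun k => ω (u k) (u (k + 1))) n]
      apply Finset.sum_congr rfl
      intro i _
      rw [hueq i.val i.2.le, hueq (i.val + 1) i.2]
      rfl
    set f : ℕ → ℝ := fun k => 2 * β * (idx (u k)) + ω (τ (idx (u k))) (u k) with hf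
    have hstep2 : ∀ k ∈ Finset.range n, ω (u k) (u (k + 1)) ≤ f (k + 1) - f k := by
      intro k hk
      rw [Finset.mem_range] at hk
      have hab : u k ≤ u (k + 1) := humono k (k + 1) (Nat.le_succ k)
      have ha0 := hu0le k
      have hbT := huT (k + 1)
      have hile := hidxmono (u k) (u (k + 1)) ha0 hab
      rcases eq_or_lt_of_le hile with h | h
      · have := hsuper (τ (idx (u k))) (u k) (u (k + 1)) (hrange _).1 (hidxτ _ ha0) hab hbT
        rw [hf]
        simp only [← h]
        linarith
      · have h1 : (idx (u k) : ℝ) + 1 ≤ (idx (u (k + 1)) : ℝ) := by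
          exact_mod_cast Nat.succ_le_of_lt h
        have h2 := hG (u k) ha0 (huT k)
        have h3 := hGnn (u (k + 1)) (hu0le (k + 1)) hbT
        have h4 := hustep k hk
        rw [hf]
        simp only []
        nlinarith
    have htel : ∑ k ∈ Finset.range n, (f (k + 1) - f k) = f n - f 0 :=
      Finset.sum_range_sub f n
    have hfn : f n ≤ β * (2 * N + 1) := by
      rw [hf]
      simp only [hun]
      have h1 : (idx T : ℝ) ≤ N := by exact_mod_cast hidxle T
      have h2 := hG T hT.le le_rfl
      nlinarith
    have hf0 : 0 ≤ f 0 := by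
      rw [hf]
      simp only [hu0]
      have h1 : (0 : ℝ) ≤ 2 * β * (idx (0 : ℝ)) := by positivity
      have h2 := hGnn (0 : ℝ) le_rfl hT.le
      linarith
    calc ∑ i : Fin n, ω (t i.castSucc) (t i.succ)
        = ∑ k ∈ Finset.range n, ω (u k) (u (k + 1)) := hsum
      _ ≤ ∑ k ∈ Finset.range n, (f (k + 1) - f k) := Finset.sum_le_sum hstep2
      _ = f n - f 0 := htel
      _ ≤ β * (2 * N + 1) := by linarith
  -- the greedy partition is admissible
  have hmem : (∑ i : Fin (N + 1), ω (τ (i.castSucc : Fin (N + 2)).val) (τ (i.succ : Fin (N + 2)).val))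
      ∈ {v : ℝ | ∃ n : ℕ, ∃ t : Fin (n + 1) → ℝ,
      Monotone t ∧ t 0 = 0 ∧ t (Fin.last n) = T ∧
      (∀ i : Fin n, ω (t i.castSucc) (t i.succ) ≤ β) ∧
      v = ∑ i : Fin n, ω (t i.castSucc) (t i.succ)} := by
    refine ⟨N + 1, fun j => τ j.val, ?_, ?_, ?_, ?_, rfl⟩
    · exact fun j k h => hτmono h
    · exact hτ0
    · exact hN₂
    · intro i
      exact hkey_le i.val
  have hsum_ge : β * N ≤ ∑ i : Fin (N + 1), ω (τ (i.castSucc : Fin (N + 2)).val)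
      (τ (i.succ : Fin (N + 2)).val) := by
    have heq : ∑ i : Fin (N + 1), ω (τ (i.castSucc : Fin (N + 2)).val) (τ (i.succ : Fin (N + 2)).val)
        = ∑ k ∈ Finset.range (N + 1), ω (τ k) (τ (k + 1)) := by
      rw [← Fin.sum_univ_eq_sum_range (fun k => ω (τ k) (τ (k + 1))) (N + 1)]
      exact Finset.sum_congr rfl fun i _ => rfl
    rw [heq, Finset.sum_range_succ]
    have h1 : ∀ k ∈ Finset.range N, β ≤ ω (τ k) (τ (k + 1)) := by
      intro k hk
      rw [Finset.mem_range] at hk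
      exact hkey_ge k (hN₁ (k + 1) (Nat.succ_le_of_lt hk))
    have h2 : (N : ℝ) * β ≤ ∑ k ∈ Finset.range N, ω (τ k) (τ (k + 1)) := by
      calc (N : ℝ) * β = ∑ _k ∈ Finset.range N, β := by rw [Finset.sum_const, Finset.card_range]; ring
        _ ≤ _ := Finset.sum_le_sum h1
    have h3 : 0 ≤ ω (τ N) (τ (N + 1)) := hnonneg _ _ (hrange N).1 (hmono N) (hrange (N + 1)).2
    linarith
  have hbdd : BddAbove {v : ℝ | ∃ n : ℕ, ∃ t : Fin (n + 1) → ℝ,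
      Monotone t ∧ t 0 = 0 ∧ t (Fin.last n) = T ∧
      (∀ i : Fin n, ω (t i.castSucc) (t i.succ) ≤ β) ∧
      v = ∑ i : Fin n, ω (t i.castSucc) (t i.succ)} := ⟨β * (2 * N + 1), hub⟩
  constructor
  · exact hsum_ge.trans (le_csSup hbdd hmem)
  · exact csSup_le ⟨_, hmem⟩ hub
end
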